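/- Let V be a finite set of points in ℤ³ contained in {(i,j,k) : j < i}. Let φᵢ(V), φⱼ(V), φₖ(V) be the projections of V in the i-, j-, and k-directions respectively (e.g., φᵢ(V) = {(j,k) : ∃ i, (i,j,k) ∈ V}). Then 2·|V| ≤ |φᵢ(V) ∪ φⱼ(V)| · (2·|φₖ(V)|)^(1/2). -/

import Mathlib

open Finset

/-- Discrete Loomis–Whitney in ℤ³. -/
lemma LW (S : Finset (ℤ × ℤ × ℤ)) :
    S.card ^ 2 ≤ (S.image (fun p => (p.2.1, p.2.2))).card *
      (S.image (fun p => (p.1, p.2.2))).card * (S.image (fun p => (p.1, p.2.1))).card := by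
  classical
  set Pi := S.image (fun p => (p.2.1, p.2.2)) with hPi
  set Pj := S.image (fun p => (p.1, p.2.2)) with hPj
  set K := S.image (fun p => (p.1, p.2.1)) with hK
  -- fiber counts
  set n : ℤ × ℤ → ℕ := fun q => (S.filter (fun p => (p.1, p.2.1) = q)).card with hn
  have hcard : S.card = ∑ q ∈ K, n q := by
    exact card_eq_sum_card_fiberwise (fun p hp => mem_image_of_mem _ hp)
  -- sum of squares ≤ |Pi| * |Pj|
  have hsq : ∑ q ∈ K, n q ^ 2 ≤ Pi.card * Pj.card := by
    have h1 : ∑ q ∈ K, n q ^ 2 =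
        ((S ×ˢ S).filter (fun pq => (pq.1.1, pq.1.2.1) = (pq.2.1, pq.2.2.1))).card := by
      rw [card_eq_sum_card_fiberwise (f := fun pq => (pq.1.1, pq.1.2.1)) (t := K)]
      · refine Finset.sum_congr rfl fun q hq => ?_
        rw [sq, ← card_product]
        congr 1
        ext ⟨p1, p2⟩
        simp only [mem_filter, mem_product]
        constructor
        · rintro ⟨⟨h1, h4⟩, h2, h5⟩
          exact ⟨⟨⟨h1, h2⟩, h4.trans h5.symm⟩, h4⟩
        · rintro ⟨⟨⟨h1, h2⟩, h3⟩, h4⟩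
          exact ⟨⟨h1, h4⟩, h2, h3.symm.trans h4⟩
      · rintro ⟨p1, p2⟩ h
        simp only [mem_coe, mem_filter, mem_product] at h ⊢
        exact mem_image_of_mem _ h.1.1
    rw [h1, ← card_product]
    apply Finset.card_le_card_of_injOn (fun pq => ((pq.1.2.1, pq.1.2.2), (pq.2.1, pq.2.2.2)))
    · rintro ⟨p1, p2⟩ h
      simp only [mem_coe, mem_filter, mem_product] at h ⊢
      exact ⟨mem_image_of_mem _ h.1.1, mem_image_of_mem _ h.1.2⟩
    · rintro ⟨⟨a1,b1,c1⟩, ⟨a2,b2,c2⟩⟩ h1 ⟨⟨a3,b3,c3⟩, ⟨a4,b4,c4⟩⟩ h2 h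
      simp only [coe_filter, Set.mem_setOf_eq, mem_product, Prod.mk.injEq] at h1 h2 h
      obtain ⟨⟨hb, hc⟩, ha, hc'⟩ := h
      obtain ⟨_, ha1, hb1⟩ := h1
      obtain ⟨_, ha3, hb3⟩ := h2
      simp_all
  -- Cauchy–Schwarz
  have hcs : (S.card : ℤ) ^ 2 ≤ (K.card : ℤ) * ∑ q ∈ K, (n q : ℤ) ^ 2 := by
    rw [hcard]
    push_cast
    exact sq_sum_le_card_mul_sum_sq
  have : (S.card : ℤ) ^ 2 ≤ (K.card : ℤ) * ((Pi.card : ℤ) * Pj.card) := by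
    refine hcs.trans (mul_le_mul_of_nonneg_left ?_ (by positivity))
    exact_mod_cast hsq
  have := this
  zify
  linarith [this]

theorem stmt_3 (V : Finset (ℤ × ℤ × ℤ)) (hV : ∀ p ∈ V, p.2.1 < p.1) :
    2 * (V.card : ℝ) ≤
      ((V.image (fun p => (p.2.1, p.2.2)) ∪ V.image (fun p => (p.1, p.2.2))).card : ℝ) *
        Real.sqrt (2 * ((V.image (fun p => (p.1, p.2.1))).card : ℝ)) := by
  classical
  set σ : ℤ × ℤ × ℤ → ℤ × ℤ × ℤ := fun p => (p.2.1, p.1, p.2.2) with hσ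
  have hσinj : Function.Injective σ := by
    rintro ⟨a, b, c⟩ ⟨d, e, f⟩ h
    simp only [hσ, Prod.mk.injEq] at h
    simp_all
  set W := V ∪ V.image σ with hW
  have hdisj : Disjoint V (V.image σ) := by
    rw [Finset.disjoint_left]
    rintro p hp hp'
    obtain ⟨q, hq, rfl⟩ := Finset.mem_image.mp hp'
    have h1 := hV _ hp
    have h2 := hV _ hq
    simp only [hσ] at h1
    omega
  have hWcard : W.card = 2 * V.card := by
    rw [hW, Finset.card_union_of_disjoint hdisj, Finset.card_image_of_injective _ hσinj]
    ring
  have hi : W.image (fun p => (p.2.1, p.2.2)) =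
      V.image (fun p => (p.2.1, p.2.2)) ∪ V.image (fun p => (p.1, p.2.2)) := by
    rw [hW, Finset.image_union, Finset.image_image]
    rfl
  have hj : W.image (fun p => (p.1, p.2.2)) =
      V.image (fun p => (p.2.1, p.2.2)) ∪ V.image (fun p => (p.1, p.2.2)) := by
    rw [hW, Finset.image_union, Finset.image_image, Finset.union_comm]
    rfl
  have hk : W.image (fun p => (p.1, p.2.1)) =
      V.image (fun p => (p.1, p.2.1)) ∪ (V.image (fun p => (p.1, p.2.1))).image Prod.swap := by
    rw [hW, Finset.image_union, Finset.image_image, Finset.image_image]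
    rfl
  have hkdisj : Disjoint (V.image (fun p => (p.1, p.2.1)))
      ((V.image (fun p => (p.1, p.2.1))).image Prod.swap) := by
    rw [Finset.disjoint_left]
    rintro q hq hq'
    obtain ⟨p, hp, rfl⟩ := Finset.mem_image.mp hq
    obtain ⟨r, hr, hrq⟩ := Finset.mem_image.mp hq'
    obtain ⟨s, hs, rfl⟩ := Finset.mem_image.mp hr
    have h1 := hV _ hp
    have h2 := hV _ hs
    simp only [Prod.swap, Prod.mk.injEq] at hrq
    omega
  have hkcard : (W.image (fun p => (p.1, p.2.1))).card =
      2 * (V.image (fun p => (p.1, p.2.1))).card := by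
    rw [hk, Finset.card_union_of_disjoint hkdisj,
      Finset.card_image_of_injective _ Prod.swap_injective]
    ring
  have hLW := LW W
  rw [hWcard, hi, hj, hkcard] at hLW
  set a : ℝ := ((V.image (fun p => (p.2.1, p.2.2)) ∪ V.image (fun p => (p.1, p.2.2))).card : ℝ)
  set b : ℝ := ((V.image (fun p => (p.1, p.2.1))).card : ℝ)
  have ha : 0 ≤ a := by positivity
  have hb : 0 ≤ b := by positivity
  have hLW' : (2 * (V.card : ℝ)) ^ 2 ≤ a ^ 2 * (2 * b) := by
    have h : ((2 * V.card) ^ 2 : ℝ) ≤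
        (((V.image (fun p => (p.2.1, p.2.2)) ∪ V.image (fun p => (p.1, p.2.2))).card *
          (V.image (fun p => (p.2.1, p.2.2)) ∪ V.image (fun p => (p.1, p.2.2))).card *
          (2 * (V.image (fun p => (p.1, p.2.1))).card) : ℕ) : ℝ) := by exact_mod_cast hLW
    push_cast at h
    nlinarith [h]
  calc 2 * (V.card : ℝ) = Real.sqrt ((2 * (V.card : ℝ)) ^ 2) :=
        (Real.sqrt_sq (by positivity)).symm
    _ ≤ Real.sqrt (a ^ 2 * (2 * b)) := Real.sqrt_le_sqrt hLW'
    _ = a * Real.sqrt (2 * b) := by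
        rw [Real.sqrt_mul (by positivity), Real.sqrt_sq ha]
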